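/- The F-sum identity (equation (4) of the paper): Let m ≥ 1, fix a word a ∈ (Fin n)^{m−1} and indices a₀ ≠ b₀ with a₀, b₀ < n, and suppose u : ℝ^{n−1} → ℝ is an eigenfunction of Δ_m with eigenvalue λ. Then (n − λ) · ∑_{x_{i,j} ∈ F_{a₀,b₀}} u(x_{i,j}) = 4 · ∑_{x_{i,j} ∈ G_{a₀,b₀}} u(x_{i,j}) + (n−2)(u(x_{a₀,a₀}) + u(x_{b₀,b₀})) + 2(n−2)·u(x_{a₀,b₀}) + 2·∑_{j ≠ a₀, b₀} u(x_{j,j}). -/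

import Mathlib

open Finset

noncomputable section

/-- Ambient Euclidean space `ℝ^{n-1}`. -/
abbrev Amb (n : ℕ) := EuclideanSpace ℝ (Fin (n - 1))

/-- The contraction `f_i(x) = (x + x_i)/2`. -/
def fmap {n : ℕ} (pts : Fin n → Amb n) (i : Fin n) (x : Amb n) : Amb n :=
  (2 : ℝ)⁻¹ • (x + pts i)

/-- Composition of contractions along a list (first entry applied last... actually first). -/
def fList {n : ℕ} (pts : Fin n → Amb n) : List (Fin n) → Amb n → Amb n
  | [] => id
  | i :: t => fmap pts i ∘ fList pts t

/-- The `m`-contraction `f_w = f_{w_0} ∘ ⋯ ∘ f_{w_{m-1}}`. -/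
def fWord {n m : ℕ} (pts : Fin n → Amb n) (w : Fin m → Fin n) : Amb n → Amb n :=
  fList pts (List.ofFn w)

/-- The vertex set `V_m = ⋃_w f_w(V_0)`, where `V_0 = {x_0, …, x_{n-1}}`. -/
def V {n : ℕ} (pts : Fin n → Amb n) (m : ℕ) : Set (Amb n) :=
  ⋃ w : Fin m → Fin n, fWord pts w '' Set.range pts

/-- Adjacency in the graph `Γ_m`. -/
def Adj {n : ℕ} (pts : Fin n → Amb n) (m : ℕ) (x y : Amb n) : Prop :=
  x ≠ y ∧ ∃ w : Fin m → Fin n,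
    x ∈ fWord pts w '' Set.range pts ∧ y ∈ fWord pts w '' Set.range pts

/-- The graph Laplacian `Δ_m u (x) = ∑_{y ~ x} (u(x) - u(y))`. -/
def lap {n : ℕ} (pts : Fin n → Amb n) (m : ℕ) (u : Amb n → ℝ) (x : Amb n) : ℝ :=
  ∑ᶠ y ∈ {y | Adj pts m x y}, (u x - u y)

/-- `u` is an eigenfunction of `Δ_m` with eigenvalue `lam`:
`Δ_m u (x) = lam * u x` for all `x ∈ V_m \ V_0`. -/
def IsEigen {n : ℕ} (pts : Fin n → Amb n) (m : ℕ) (u : Amb n → ℝ) (lam : ℝ) : Prop :=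
  ∀ x ∈ V pts m \ V pts 0, lap pts m u x = lam * u x

/-- The point `x_{r,s} = f_a((x_r + x_s)/2)` for a word `a` of length `m-1`. -/
def xpt {n m : ℕ} (pts : Fin n → Amb n) (a : Fin m → Fin n) (r s : Fin n) : Amb n :=
  fWord pts a ((2 : ℝ)⁻¹ • (pts r + pts s))

/-- The graph energy `E_m(u) = ∑_{x ~ y} (u(x) - u(y))²`, summed over unordered
adjacent pairs (each ordered pair counted once, then halved). -/
def energy {n : ℕ} (pts : Fin n → Amb n) (m : ℕ) (u : Amb n → ℝ) : ℝ :=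
  (2 : ℝ)⁻¹ * ∑ᶠ p ∈ {p : Amb n × Amb n | Adj pts m p.1 p.2}, (u p.1 - u p.2) ^ 2


/-- scaled weight vector of a list: `Mw l r = Σ_s 2^s [l_s = r]`. -/
def Mw {n : ℕ} : List (Fin n) → Fin n → ℕ
  | [], _ => 0
  | c :: t, r => (if c = r then 1 else 0) + 2 * Mw t r

lemma Mw_sum {n : ℕ} [NeZero n] (l : List (Fin n)) : ∑ r, Mw l r + 1 = 2 ^ l.length := by
  induction l with
  | nil => simp [Mw]
  | cons c t ih =>
    simp only [Mw, List.length_cons, Finset.sum_add_distrib, ← Finset.mul_sum,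
      Finset.sum_ite_eq, Finset.mem_univ, if_true]
    omega

lemma Mw_inj {n : ℕ} (q B : List (Fin n)) (hlen : q.length = B.length)
    (h : ∀ r, Mw q r = Mw B r) : q = B := by
  induction q generalizing B with
  | nil => cases B with
    | nil => rfl
    | cons d t => simp at hlen
  | cons c s ih =>
    cases B with
    | nil => simp at hlen
    | cons d t =>
      have hcd : c = d := by
        by_contra hne
        have h1 := h c
        simp only [Mw] at h1
        rw [if_neg (show ¬d = c from fun h' => hne h'.symm)] at h1
        simp only [eq_self_iff_true, if_true] at h1
        omega
      subst hcd
      have : s = t := by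
        apply ih t (by simpa using hlen)
        intro r
        have h1 := h r
        simp only [Mw] at h1
        omega
      rw [this]

lemma Mw_append_singleton {n : ℕ} (q : List (Fin n)) (c r : Fin n) :
    Mw (q ++ [c]) r = Mw q r + (if c = r then 2 ^ q.length else 0) := by
  induction q with
  | nil => simp [Mw]
  | cons d t ih =>
    rw [List.cons_append]
    simp only [Mw, ih, List.length_cons]
    split_ifs <;> ring

lemma Mw_key {n : ℕ} (q B : List (Fin n)) (k i j : Fin n) (hij : i ≠ j)
    (hlen : q.length = B.length + 1)
    (h : ∀ r, (if k = r then 1 else 0) + Mw q r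
        = ((if i = r then 1 else 0) + (if j = r then 1 else 0)) + 2 * Mw B r) :
    (q = i :: B ∧ k = j) ∨ (q = j :: B ∧ k = i) := by
  cases q with
  | nil => simp at hlen
  | cons c s =>
    have hrest : (c = i ∧ k = j) ∨ (c = j ∧ k = i) := by
      by_cases hci : c = i
      · subst hci
        left
        refine ⟨rfl, ?_⟩
        by_contra hkj
        have h1 := h j
        simp only [Mw] at h1
        rw [if_neg hkj, if_neg hij] at h1
        simp only [eq_self_iff_true, if_true] at h1
        omega
      · right
        have hki : k = i := by
          by_contra hki
          have h1 := h i
          simp only [Mw] at h1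
          rw [if_neg hki, if_neg hci, if_neg (show ¬j = i from fun h' => hij h'.symm)] at h1
          simp only [eq_self_iff_true, if_true] at h1
          omega
        subst hki
        refine ⟨?_, rfl⟩
        by_contra hcj
        have h1 := h j
        simp only [Mw] at h1
        rw [if_neg hij, if_neg hcj] at h1
        simp only [eq_self_iff_true, if_true] at h1
        omega
    have hs : s = B := by
      apply Mw_inj s B (by simpa using hlen)
      intro r
      have h1 := h r
      simp only [Mw] at h1
      rcases hrest with ⟨hc, hk⟩ | ⟨hc, hk⟩ <;> subst hc <;> subst hk <;> omega
    rcases hrest with ⟨hc, hk⟩ | ⟨hc, hk⟩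
    · exact Or.inl ⟨by rw [hc, hs], hk⟩
    · exact Or.inr ⟨by rw [hc, hs], hk⟩

variable {n : ℕ} (pts : Fin n → Amb n)

lemma basis_expand (k : Fin n) : pts k = ∑ r, (if k = r then (1:ℝ) else 0) • pts r := by
  simp [ite_smul]

lemma fList_weights [NeZero n] (l : List (Fin n)) (β : Fin n → ℝ) :
    fList pts l (∑ r, β r • pts r)
      = ∑ r, (((2:ℝ) ^ l.length)⁻¹ * (β r + (Mw l.reverse r : ℝ))) • pts r := by
  induction l with
  | nil => simp [fList, Mw]
  | cons i t ih =>
    show (2:ℝ)⁻¹ • (fList pts t (∑ r, β r • pts r) + pts i) = _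
    rw [ih, basis_expand pts i, ← Finset.sum_add_distrib, Finset.smul_sum]
    refine Finset.sum_congr rfl fun r _ => ?_
    rw [← add_smul, smul_smul, List.reverse_cons, Mw_append_singleton]
    congr 1
    rw [List.length_cons, List.length_reverse]
    push_cast
    have hc : ((2:ℝ)^t.length)⁻¹ * 2^t.length = 1 := inv_mul_cancel₀ (by positivity)
    split_ifs <;> rw [pow_succ, mul_inv]
    · linear_combination (-(2:ℝ)⁻¹) * hc
    · ring

lemma weight_sum [NeZero n] (l : List (Fin n)) (β : Fin n → ℝ) (hβ : ∑ r, β r = 1) :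
    ∑ r, ((2:ℝ) ^ l.length)⁻¹ * (β r + (Mw l.reverse r : ℝ)) = 1 := by
  rw [← Finset.mul_sum, Finset.sum_add_distrib, hβ]
  have h := Mw_sum (n := n) l.reverse
  rw [List.length_reverse] at h
  have h2 : (∑ r, (Mw l.reverse r : ℝ)) = 2 ^ l.length - 1 := by
    rw [← Nat.cast_sum]
    have : ((∑ r, Mw l.reverse r : ℕ) : ℝ) + 1 = 2 ^ l.length := by exact_mod_cast h
    linarith
  rw [h2]
  have h3 : ((2:ℝ) ^ l.length) ≠ 0 := by positivity
  field_simp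
  ring

lemma point_weight_eq [NeZero n] (hpts : AffineIndependent ℝ pts) (l l' : List (Fin n))
    (hlen : l.length = l'.length) (β γ : Fin n → ℝ) (hβ : ∑ r, β r = 1) (hγ : ∑ r, γ r = 1)
    (h : fList pts l (∑ r, β r • pts r) = fList pts l' (∑ r, γ r • pts r)) :
    ∀ r, β r + (Mw l.reverse r : ℝ) = γ r + (Mw l'.reverse r : ℝ) := by
  rw [fList_weights pts l β, fList_weights pts l' γ] at h
  have s1 := weight_sum l β hβ
  have s2 := weight_sum l' γ hγ
  have c1 := Finset.univ.affineCombination_eq_linear_combination pts _ s1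
  have c2 := Finset.univ.affineCombination_eq_linear_combination pts _ s2
  have key := (affineIndependent_iff_eq_of_fintype_affineCombination_eq ℝ pts).mp hpts _ _ s1 s2
    (by rw [c1, c2]; exact h)
  intro r
  have := congrFun key r
  have h3 : ((2:ℝ) ^ l'.length)⁻¹ ≠ 0 := by positivity
  rw [hlen] at this
  exact mul_left_cancel₀ h3 this

lemma eindic_sum [NeZero n] (k : Fin n) : ∑ r, (if k = r then (1:ℝ) else 0) = 1 := by simp

lemma fList_append (q1 q2 : List (Fin n)) (x : Amb n) :
    fList pts (q1 ++ q2) x = fList pts q1 (fList pts q2 x) := by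
  induction q1 with
  | nil => rfl
  | cons c t ih => simp [fList, ih]

lemma xpt_as_fList {m' : ℕ} (a : Fin m' → Fin n) (c k : Fin n) :
    xpt pts a c k = fList pts (List.ofFn a ++ [c]) (pts k) := by
  rw [fList_append]
  have h1 : fList pts [c] (pts k) = (2:ℝ)⁻¹ • (pts c + pts k) := by
    show (2:ℝ)⁻¹ • (pts k + pts c) = _
    rw [add_comm]
  rw [h1]
  rfl

lemma addr_eq {m' : ℕ} [NeZero n] (hpts : AffineIndependent ℝ pts)
    (l : List (Fin n)) (hl : l.length = m' + 1) (k : Fin n)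
    (a : Fin m' → Fin n) (i j : Fin n) (hij : i ≠ j)
    (h : fList pts l (pts k) = xpt pts a i j) :
    (l = List.ofFn a ++ [i] ∧ k = j) ∨ (l = List.ofFn a ++ [j] ∧ k = i) := by
  rw [xpt_as_fList] at h
  have h' : fList pts l (∑ r, (if k = r then (1:ℝ) else 0) • pts r)
      = fList pts (List.ofFn a ++ [i]) (∑ r, (if j = r then (1:ℝ) else 0) • pts r) := by
    rw [← basis_expand, ← basis_expand]; exact h
  have weights := point_weight_eq pts hpts l (List.ofFn a ++ [i])
    (by simp [hl]) _ _ (eindic_sum k) (eindic_sum j) h'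
  have hN : ∀ r, (if k = r then 1 else 0) + Mw l.reverse r
      = ((if i = r then 1 else 0) + (if j = r then 1 else 0)) + 2 * Mw (List.ofFn a).reverse r := by
    intro r
    have hw := weights r
    simp only [List.reverse_append, List.reverse_singleton, List.singleton_append,
      List.nil_append, Mw] at hw
    push_cast at hw
    split_ifs at hw ⊢ <;> exact Nat.cast_injective (R := ℝ) (by push_cast; linarith)
  rcases Mw_key l.reverse (List.ofFn a).reverse k i j hij
      (by simp [hl]) hN with ⟨hq, hk⟩ | ⟨hq, hk⟩
  · left
    refine ⟨List.reverse_injective ?_, hk⟩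
    rw [hq, List.reverse_append]
    simp
  · right
    refine ⟨List.reverse_injective ?_, hk⟩
    rw [hq, List.reverse_append]
    simp

lemma xpt_symm {m' : ℕ} (a : Fin m' → Fin n) (r s : Fin n) :
    xpt pts a r s = xpt pts a s r := by
  unfold xpt
  rw [add_comm]

lemma xpt_weight_eq {m' : ℕ} [NeZero n] (hpts : AffineIndependent ℝ pts)
    (a : Fin m' → Fin n) (r s r' s' : Fin n)
    (h : xpt pts a r s = xpt pts a r' s') :
    ∀ t, ((if r = t then 1 else 0) + (if s = t then 1 else 0) : ℕ)
        = (if r' = t then 1 else 0) + (if s' = t then 1 else 0) := by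
  rw [xpt_as_fList, xpt_as_fList] at h
  have h' : fList pts (List.ofFn a ++ [r]) (∑ t, (if s = t then (1:ℝ) else 0) • pts t)
      = fList pts (List.ofFn a ++ [r']) (∑ t, (if s' = t then (1:ℝ) else 0) • pts t) := by
    rw [← basis_expand, ← basis_expand]; exact h
  have weights := point_weight_eq pts hpts _ _ (by simp) _ _ (eindic_sum s) (eindic_sum s') h'
  intro t
  have hw := weights t
  simp only [List.reverse_append, List.reverse_singleton, List.singleton_append,
    List.nil_append, Mw] at hw
  push_cast at hw
  split_ifs at hw ⊢ <;> exact Nat.cast_injective (R := ℝ) (by push_cast; linarith)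

lemma xpt_right_inj {m' : ℕ} [NeZero n] (hpts : AffineIndependent ℝ pts)
    (a : Fin m' → Fin n) (c : Fin n) {k k' : Fin n}
    (h : xpt pts a c k = xpt pts a c k') : k = k' := by
  have h1 := xpt_weight_eq pts hpts a c k c k' h k
  by_contra hne
  rw [if_pos rfl, if_neg (fun h' : k' = k => hne h'.symm)] at h1
  split_ifs at h1 <;> omega

lemma xpt_cross {m' : ℕ} [NeZero n] (hpts : AffineIndependent ℝ pts)
    (a : Fin m' → Fin n) {i j k k' : Fin n} (hij : i ≠ j)
    (h : xpt pts a i k = xpt pts a j k') : k = j ∧ k' = i := by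
  have h1 := xpt_weight_eq pts hpts a i k j k' h
  have hi := h1 i
  have hj := h1 j
  rw [if_pos rfl, if_neg (fun h' : j = i => hij h'.symm)] at hi
  rw [if_neg hij, if_pos rfl] at hj
  constructor
  · by_contra hne
    rw [if_neg hne] at hj
    split_ifs at hj <;> omega
  · by_contra hne
    rw [if_neg hne] at hi
    split_ifs at hi <;> omega

lemma replicate_fix (r : Fin n) (L : ℕ) : fList pts (List.replicate L r) (pts r) = pts r := by
  induction L with
  | zero => rfl
  | succ L ih =>
    show fmap pts r (fList pts (List.replicate L r) (pts r)) = pts r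
    rw [ih]
    show (2:ℝ)⁻¹ • (pts r + pts r) = pts r
    rw [← two_smul ℝ, smul_smul]
    norm_num

lemma xpt_ne_pts {m' : ℕ} [NeZero n] (hpts : AffineIndependent ℝ pts)
    (a : Fin m' → Fin n) (i j : Fin n) (hij : i ≠ j) (r : Fin n) :
    xpt pts a i j ≠ pts r := by
  intro h
  have h' : fList pts (List.replicate (m'+1) r) (pts r) = xpt pts a i j := by
    rw [replicate_fix, h]
  rcases addr_eq pts hpts _ (by simp) r a i j hij h' with ⟨hl, hk⟩ | ⟨hl, hk⟩
  · have : i ∈ List.replicate (m'+1) r := by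
      rw [hl]; simp
    exact hij ((List.eq_of_mem_replicate this).trans hk)
  · have : j ∈ List.replicate (m'+1) r := by
      rw [hl]; simp
    exact hij ((List.eq_of_mem_replicate this).trans hk).symm

local instance {n : ℕ} : DecidableEq (Amb n) := Classical.decEq _

lemma ofFn_snoc {m' : ℕ} (a : Fin m' → Fin n) (c : Fin n) :
    List.ofFn (Fin.snoc a c : Fin (m'+1) → Fin n) = List.ofFn a ++ [c] := by
  rw [List.ofFn_succ']
  simp [List.concat_eq_append]

lemma fWord_snoc {m' : ℕ} (a : Fin m' → Fin n) (c : Fin n) (x : Amb n) :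
    fWord pts (Fin.snoc a c : Fin (m'+1) → Fin n) x = fList pts (List.ofFn a ++ [c]) x := by
  rw [fWord, ofFn_snoc]

lemma xpt_mem_cell {m' : ℕ} (a : Fin m' → Fin n) (c k : Fin n) :
    xpt pts a c k ∈ fWord pts (Fin.snoc a c : Fin (m'+1) → Fin n) '' Set.range pts :=
  ⟨pts k, ⟨k, rfl⟩, by rw [fWord_snoc, ← xpt_as_fList]⟩

lemma adj_set {m' : ℕ} [NeZero n] (hpts : AffineIndependent ℝ pts)
    (a : Fin m' → Fin n) (i j : Fin n) (hij : i ≠ j) :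
    {y | Adj pts (m'+1) (xpt pts a i j) y}
      = ↑(((Finset.univ.image (xpt pts a i)) ∪ (Finset.univ.image (xpt pts a j))).erase
          (xpt pts a i j)) := by
  ext y
  simp only [Set.mem_setOf_eq, Finset.coe_erase, Set.mem_diff, Finset.mem_coe,
    Finset.mem_union, Finset.mem_image, Finset.mem_univ, true_and, Set.mem_singleton_iff]
  constructor
  · rintro ⟨hne, w, ⟨_, ⟨k, rfl⟩, hx⟩, ⟨_, ⟨k', rfl⟩, hy⟩⟩
    have hx' : fList pts (List.ofFn w) (pts k) = xpt pts a i j := hx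
    rcases addr_eq pts hpts (List.ofFn w) (by simp) k a i j hij hx' with ⟨hw, _⟩ | ⟨hw, _⟩
    · refine ⟨Or.inl ⟨k', ?_⟩, fun h => hne h.symm⟩
      have hy' : fList pts (List.ofFn w) (pts k') = y := hy
      rw [hw, ← xpt_as_fList] at hy'
      exact hy'
    · refine ⟨Or.inr ⟨k', ?_⟩, fun h => hne h.symm⟩
      have hy' : fList pts (List.ofFn w) (pts k') = y := hy
      rw [hw, ← xpt_as_fList] at hy'
      exact hy'
  · rintro ⟨(⟨k, rfl⟩ | ⟨k, rfl⟩), hne⟩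
    · exact ⟨fun h => hne h.symm, Fin.snoc a i, xpt_mem_cell pts a i j, xpt_mem_cell pts a i k⟩
    · exact ⟨fun h => hne h.symm, Fin.snoc a j,
        by rw [xpt_symm pts a i j]; exact xpt_mem_cell pts a j i, xpt_mem_cell pts a j k⟩

lemma cell_inter {m' : ℕ} [NeZero n] (hpts : AffineIndependent ℝ pts)
    (a : Fin m' → Fin n) (i j : Fin n) (hij : i ≠ j) :
    (Finset.univ.image (xpt pts a i)) ∩ (Finset.univ.image (xpt pts a j))
      = {xpt pts a i j} := by
  ext z
  simp only [Finset.mem_inter, Finset.mem_image, Finset.mem_univ, true_and,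
    Finset.mem_singleton]
  constructor
  · rintro ⟨⟨k, rfl⟩, ⟨k', hk'⟩⟩
    rcases xpt_cross pts hpts a hij hk'.symm with ⟨hk, _⟩
    rw [hk]
  · rintro rfl
    exact ⟨⟨j, rfl⟩, ⟨i, (xpt_symm pts a i j).symm⟩⟩

lemma star_eq {m' : ℕ} [NeZero n] (hpts : AffineIndependent ℝ pts)
    (a : Fin m' → Fin n) (u : Amb n → ℝ) (lam : ℝ)
    (hu : IsEigen pts (m'+1) u lam) (i j : Fin n) (hij : i ≠ j) :
    (2*(n:ℝ) - lam) * u (xpt pts a i j)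
      = (∑ k, u (xpt pts a i k)) + ∑ k, u (xpt pts a j k) := by
  classical
  set x := xpt pts a i j with hxdef
  have hxV : x ∈ V pts (m'+1) := Set.mem_iUnion.mpr ⟨Fin.snoc a i, xpt_mem_cell pts a i j⟩
  have hxV0 : x ∉ V pts 0 := by
    intro hx
    simp only [V, Set.mem_iUnion, fWord, List.ofFn_zero] at hx
    obtain ⟨w, _, ⟨r, rfl⟩, hr⟩ := hx
    exact xpt_ne_pts pts hpts a i j hij r hr.symm
  have heig := hu x ⟨hxV, hxV0⟩
  unfold lap at heig
  rw [adj_set pts hpts a i j hij, finsum_mem_coe_finset] at heig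
  set Ti := Finset.univ.image (xpt pts a i) with hTi
  set Tj := Finset.univ.image (xpt pts a j) with hTj
  have hxTi : x ∈ Ti := Finset.mem_image.mpr ⟨j, Finset.mem_univ j, rfl⟩
  have hxU : x ∈ Ti ∪ Tj := Finset.mem_union_left _ hxTi
  rw [Finset.sum_erase_eq_sub hxU, sub_self] at heig
  have hsplit : ∑ y ∈ Ti ∪ Tj, (u x - u y) + ∑ y ∈ Ti ∩ Tj, (u x - u y)
      = ∑ y ∈ Ti, (u x - u y) + ∑ y ∈ Tj, (u x - u y) := Finset.sum_union_inter
  rw [cell_inter pts hpts a i j hij] at hsplit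
  have hi : ∑ y ∈ Ti, (u x - u y) = n * u x - ∑ k, u (xpt pts a i k) := by
    rw [hTi, Finset.sum_image (fun k _ k' _ h => xpt_right_inj pts hpts a i h)]
    rw [Finset.sum_sub_distrib, Finset.sum_const, Finset.card_univ, Fintype.card_fin]
    simp [nsmul_eq_mul]
  have hj : ∑ y ∈ Tj, (u x - u y) = n * u x - ∑ k, u (xpt pts a j k) := by
    rw [hTj, Finset.sum_image (fun k _ k' _ h => xpt_right_inj pts hpts a j h)]
    rw [Finset.sum_sub_distrib, Finset.sum_const, Finset.card_univ, Fintype.card_fin]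
    simp [nsmul_eq_mul]
  rw [Finset.sum_singleton, sub_self] at hsplit
  have : ∑ y ∈ Ti ∪ Tj, (u x - u y)
      = 2 * n * u x - ((∑ k, u (xpt pts a i k)) + ∑ k, u (xpt pts a j k)) := by
    have := hsplit
    rw [hi, hj] at this
    linarith
  rw [this] at heig
  linarith [heig]

lemma half_sum (P : Fin n → Fin n → Prop) [∀ i j : Fin n, Decidable (P i j)]
    (hP : ∀ i j, P i j ↔ P j i) (g : Fin n → Fin n → ℝ) (hg : ∀ i j, g i j = g j i) :
    2 * (∑ i, ∑ j ∈ Finset.univ.filter (fun j => i < j ∧ P i j), g i j)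
      = ∑ i, ∑ j ∈ Finset.univ.filter (fun j => j ≠ i ∧ P i j), g i j := by
  simp only [Finset.sum_filter]
  have h1 : ∀ i j : Fin n, (if (j ≠ i ∧ P i j) then g i j else 0)
      = (if (i < j ∧ P i j) then g i j else 0) + (if (j < i ∧ P i j) then g i j else 0) := by
    intro i j
    rcases lt_trichotomy i j with h | h | h
    · simp [h, h.ne', not_lt.mpr h.le]
    · simp [h]
    · simp [h, h.ne, not_lt.mpr h.le]
  have h2 : (∑ i, ∑ j, if (j < i ∧ P i j) then g i j else 0)
      = ∑ i, ∑ j, if (i < j ∧ P i j) then g i j else 0 := by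
    rw [Finset.sum_comm]
    refine Finset.sum_congr rfl fun b _ => Finset.sum_congr rfl fun c _ => ?_
    rw [hg c b]
    exact if_congr (and_congr Iff.rfl (hP c b)) rfl rfl
  simp_rw [h1, Finset.sum_add_distrib, h2]
  ring

set_option maxHeartbeats 2000000

/-- The F-sum identity (equation (4)). -/
theorem F_sum_identity
    (n : ℕ) (hn : 2 ≤ n) (pts : Fin n → Amb n) (hpts : AffineIndependent ℝ pts)
    (m : ℕ) (hm : 1 ≤ m) (a : Fin (m - 1) → Fin n)
    (a0 b0 : Fin n) (hab : a0 ≠ b0) (lam : ℝ)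
    (u : Amb n → ℝ) (hu : IsEigen pts m u lam) :
    ((n : ℝ) - lam) * (∑ i : Fin n, ∑ j ∈ Finset.univ.filter
        (fun j => i < j ∧ (i = a0 ∨ i = b0 ∨ j = a0 ∨ j = b0) ∧
          ¬((i = a0 ∧ j = b0) ∨ (i = b0 ∧ j = a0))), u (xpt pts a i j)) =
      4 * (∑ i : Fin n, ∑ j ∈ Finset.univ.filter
          (fun j => i < j ∧ i ≠ a0 ∧ i ≠ b0 ∧ j ≠ a0 ∧ j ≠ b0), u (xpt pts a i j)) +
        ((n : ℝ) - 2) * (u (xpt pts a a0 a0) + u (xpt pts a b0 b0)) +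
        2 * ((n : ℝ) - 2) * u (xpt pts a a0 b0) +
        2 * ∑ j ∈ Finset.univ.filter (fun j => j ≠ a0 ∧ j ≠ b0), u (xpt pts a j j) := by
  classical
  haveI : NeZero n := ⟨by omega⟩
  obtain ⟨m', rfl⟩ : ∃ m', m = m' + 1 := ⟨m - 1, (Nat.succ_pred_eq_of_pos hm).symm⟩
  set C : Finset (Fin n) := Finset.univ.filter (fun j => j ≠ a0 ∧ j ≠ b0) with hC
  have hsplit : ∀ h : Fin n → ℝ, ∑ i, h i = h a0 + h b0 + ∑ i ∈ C, h i := by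
    intro h
    have hu0 : (Finset.univ : Finset (Fin n)) = insert a0 (insert b0 C) := by
      ext t
      simp only [Finset.mem_univ, Finset.mem_insert, hC, Finset.mem_filter, true_iff, true_and]
      tauto
    rw [hu0, Finset.sum_insert (by simp [hC, hab]), Finset.sum_insert (by simp [hC])]
    ring
  have Tsym : ∀ i j, u (xpt pts a i j) = u (xpt pts a j i) :=
    fun i j => congrArg u (xpt_symm pts a i j)
  have hstar : ∀ i j, i ≠ j → (2*(n:ℝ) - lam) * u (xpt pts a i j)
      = (∑ k, u (xpt pts a i k)) + ∑ k, u (xpt pts a j k) :=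
    fun i j hij => star_eq pts hpts a u lam hu i j hij
  set Sa := ∑ k ∈ C, u (xpt pts a a0 k) with hSa
  set Sb := ∑ k ∈ C, u (xpt pts a b0 k) with hSb
  set SD := ∑ j ∈ C, u (xpt pts a j j) with hSD
  set DG := ∑ j ∈ C, ∑ k ∈ C.erase j, u (xpt pts a j k) with hDG
  have hCcard : (C.card : ℝ) = (n : ℝ) - 2 := by
    have h1 : C = Finset.univ \ {a0, b0} := by
      ext t
      simp [hC]
    have h2 : C.card = n - 2 := by
      rw [h1, Finset.card_sdiff_of_subset (by simp)]
      simp [Finset.card_pair hab]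
    rw [h2]
    push_cast [Nat.cast_sub hn]
    ring
  have hRa : (∑ k, u (xpt pts a a0 k))
      = u (xpt pts a a0 a0) + u (xpt pts a a0 b0) + Sa := by
    rw [hsplit (fun k => u (xpt pts a a0 k))]
  have hRb : (∑ k, u (xpt pts a b0 k))
      = u (xpt pts a a0 b0) + u (xpt pts a b0 b0) + Sb := by
    rw [hsplit (fun k => u (xpt pts a b0 k)), Tsym b0 a0]
  have hmemC : ∀ j ∈ C, j ≠ a0 ∧ j ≠ b0 := by
    intro j hj
    rw [hC, Finset.mem_filter] at hj
    exact hj.2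
  have he1 : (2*(n:ℝ) - lam) * Sa
      = ((n:ℝ) - 2) * (∑ k, u (xpt pts a a0 k)) + ∑ j ∈ C, (∑ k, u (xpt pts a j k)) := by
    rw [hSa, Finset.mul_sum,
      Finset.sum_congr rfl (fun j hj => hstar a0 j (fun h => (hmemC j hj).1 h.symm)),
      Finset.sum_add_distrib, Finset.sum_const, nsmul_eq_mul, hCcard]
  have he2 : (2*(n:ℝ) - lam) * Sb
      = ((n:ℝ) - 2) * (∑ k, u (xpt pts a b0 k)) + ∑ j ∈ C, (∑ k, u (xpt pts a j k)) := by
    rw [hSb, Finset.mul_sum,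
      Finset.sum_congr rfl (fun j hj => hstar b0 j (fun h => (hmemC j hj).2 h.symm)),
      Finset.sum_add_distrib, Finset.sum_const, nsmul_eq_mul, hCcard]
  have hSR : (∑ j ∈ C, (∑ k, u (xpt pts a j k))) = Sa + Sb + SD + DG := by
    have step : ∀ j ∈ C, (∑ k, u (xpt pts a j k))
        = u (xpt pts a a0 j) + u (xpt pts a b0 j)
          + (u (xpt pts a j j) + ∑ k ∈ C.erase j, u (xpt pts a j k)) := by
      intro j hj
      rw [hsplit (fun k => u (xpt pts a j k)), ← Finset.add_sum_erase C (fun k => u (xpt pts a j k)) hj,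
        Tsym j a0, Tsym j b0]
    rw [Finset.sum_congr rfl step, Finset.sum_add_distrib, Finset.sum_add_distrib,
      Finset.sum_add_distrib]
    ring
  have h2AF : 2 * (∑ i : Fin n, ∑ j ∈ Finset.univ.filter
        (fun j => i < j ∧ (i = a0 ∨ i = b0 ∨ j = a0 ∨ j = b0) ∧
          ¬((i = a0 ∧ j = b0) ∨ (i = b0 ∧ j = a0))), u (xpt pts a i j))
      = ∑ i : Fin n, ∑ j ∈ Finset.univ.filter
        (fun j => j ≠ i ∧ (i = a0 ∨ i = b0 ∨ j = a0 ∨ j = b0) ∧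
          ¬((i = a0 ∧ j = b0) ∨ (i = b0 ∧ j = a0))), u (xpt pts a i j) :=
    half_sum (fun i j => (i = a0 ∨ i = b0 ∨ j = a0 ∨ j = b0) ∧
          ¬((i = a0 ∧ j = b0) ∨ (i = b0 ∧ j = a0)))
      (fun i j => by tauto) (fun i j => u (xpt pts a i j)) Tsym
  have hBF : (∑ i : Fin n, ∑ j ∈ Finset.univ.filter
        (fun j => j ≠ i ∧ (i = a0 ∨ i = b0 ∨ j = a0 ∨ j = b0) ∧
          ¬((i = a0 ∧ j = b0) ∨ (i = b0 ∧ j = a0))), u (xpt pts a i j))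
      = 2 * (Sa + Sb) := by
    rw [hsplit (fun i => ∑ j ∈ Finset.univ.filter
        (fun j => j ≠ i ∧ (i = a0 ∨ i = b0 ∨ j = a0 ∨ j = b0) ∧
          ¬((i = a0 ∧ j = b0) ∨ (i = b0 ∧ j = a0))), u (xpt pts a i j))]
    have hfa : Finset.univ.filter
        (fun j => j ≠ a0 ∧ (a0 = a0 ∨ a0 = b0 ∨ j = a0 ∨ j = b0) ∧
          ¬((a0 = a0 ∧ j = b0) ∨ (a0 = b0 ∧ j = a0))) = C := by
      ext t
      simp only [Finset.mem_filter, Finset.mem_univ, true_and, hC]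
      tauto
    have hfb : Finset.univ.filter
        (fun j => j ≠ b0 ∧ (b0 = a0 ∨ b0 = b0 ∨ j = a0 ∨ j = b0) ∧
          ¬((b0 = a0 ∧ j = b0) ∨ (b0 = b0 ∧ j = a0))) = C := by
      ext t
      simp only [Finset.mem_filter, Finset.mem_univ, true_and, hC]
      tauto
    have hfc : ∀ i ∈ C, Finset.univ.filter
        (fun j => j ≠ i ∧ (i = a0 ∨ i = b0 ∨ j = a0 ∨ j = b0) ∧
          ¬((i = a0 ∧ j = b0) ∨ (i = b0 ∧ j = a0))) = {a0, b0} := by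
      intro i hi
      obtain ⟨hia, hib⟩ := hmemC i hi
      ext t
      simp only [Finset.mem_filter, Finset.mem_univ, true_and, Finset.mem_insert,
        Finset.mem_singleton]
      constructor
      · rintro ⟨hti, hor, _⟩
        tauto
      · rintro (rfl | rfl)
        · exact ⟨fun h => hia h.symm, by tauto, by tauto⟩
        · exact ⟨fun h => hib h.symm, by tauto, by tauto⟩
    rw [hfa, hfb]
    have hstep : (∑ i ∈ C, ∑ j ∈ Finset.univ.filter
        (fun j => j ≠ i ∧ (i = a0 ∨ i = b0 ∨ j = a0 ∨ j = b0) ∧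
          ¬((i = a0 ∧ j = b0) ∨ (i = b0 ∧ j = a0))), u (xpt pts a i j))
        = ∑ i ∈ C, (u (xpt pts a a0 i) + u (xpt pts a b0 i)) := by
      refine Finset.sum_congr rfl fun i hi => ?_
      rw [hfc i hi, Finset.sum_pair hab, Tsym i a0, Tsym i b0]
    rw [hstep, Finset.sum_add_distrib, ← hSa, ← hSb]
    ring
  have h2AG : 2 * (∑ i : Fin n, ∑ j ∈ Finset.univ.filter
        (fun j => i < j ∧ i ≠ a0 ∧ i ≠ b0 ∧ j ≠ a0 ∧ j ≠ b0), u (xpt pts a i j)) = DG := by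
    have h1 : 2 * (∑ i : Fin n, ∑ j ∈ Finset.univ.filter
        (fun j => i < j ∧ i ≠ a0 ∧ i ≠ b0 ∧ j ≠ a0 ∧ j ≠ b0), u (xpt pts a i j))
        = ∑ i : Fin n, ∑ j ∈ Finset.univ.filter
        (fun j => j ≠ i ∧ i ≠ a0 ∧ i ≠ b0 ∧ j ≠ a0 ∧ j ≠ b0), u (xpt pts a i j) :=
      half_sum (fun i j => i ≠ a0 ∧ i ≠ b0 ∧ j ≠ a0 ∧ j ≠ b0)
        (fun i j => by tauto) (fun i j => u (xpt pts a i j)) Tsym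
    rw [h1, hsplit (fun i => ∑ j ∈ Finset.univ.filter
        (fun j => j ≠ i ∧ i ≠ a0 ∧ i ≠ b0 ∧ j ≠ a0 ∧ j ≠ b0), u (xpt pts a i j))]
    have hfa : Finset.univ.filter
        (fun j => j ≠ a0 ∧ a0 ≠ a0 ∧ a0 ≠ b0 ∧ j ≠ a0 ∧ j ≠ b0) = ∅ := by
      ext t; simp
    have hfb : Finset.univ.filter
        (fun j => j ≠ b0 ∧ b0 ≠ a0 ∧ b0 ≠ b0 ∧ j ≠ a0 ∧ j ≠ b0) = ∅ := by
      ext t; simp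
    have hfc : ∀ i ∈ C, Finset.univ.filter
        (fun j => j ≠ i ∧ i ≠ a0 ∧ i ≠ b0 ∧ j ≠ a0 ∧ j ≠ b0) = C.erase i := by
      intro i hi
      obtain ⟨hia, hib⟩ := hmemC i hi
      ext t
      simp only [Finset.mem_filter, Finset.mem_univ, true_and, Finset.mem_erase, hC]
      tauto
    rw [hfa, hfb]
    simp only [Finset.sum_empty]
    have hstep : (∑ i ∈ C, ∑ j ∈ Finset.univ.filter
        (fun j => j ≠ i ∧ i ≠ a0 ∧ i ≠ b0 ∧ j ≠ a0 ∧ j ≠ b0), u (xpt pts a i j))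
        = ∑ i ∈ C, ∑ j ∈ C.erase i, u (xpt pts a i j) := by
      refine Finset.sum_congr rfl fun i hi => ?_
      rw [hfc i hi]
    rw [hstep, hDG]
    ring
  have hAF : (∑ i : Fin n, ∑ j ∈ Finset.univ.filter
        (fun j => i < j ∧ (i = a0 ∨ i = b0 ∨ j = a0 ∨ j = b0) ∧
          ¬((i = a0 ∧ j = b0) ∨ (i = b0 ∧ j = a0))), u (xpt pts a i j)) = Sa + Sb := by
    rw [hBF] at h2AF
    linarith
  linear_combination ((n:ℝ) - lam) * hAF + he1 + he2 + ((n:ℝ) - 2) * hRa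
    + ((n:ℝ) - 2) * hRb + 2 * hSR - 2 * h2AG
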